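/- Let f : ℝ → ℝ be continuous with F(u) = ∫₀ᵘ f(s) ds, σ > 0, γ > 2, and suppose |u·f(u)| ≤ γ·|F(u) − σ| for all u, with F(ũ) − σ ≠ 0 for some fixed ũ ≠ 0. Then there exists A > 0 such that |F(u) − σ| ≤ A·|u|^γ for all u with |u| ≥ |ũ| (of the same sign as ũ); in particular one may take A = |F(ũ) − σ|/|ũ|^γ. -/

import Mathlib

theorem stmt_4 (f F : ℝ → ℝ) (σ γ utld : ℝ)
    (hf : Continuous f)
    (hF : ∀ u : ℝ, F u = ∫ s in (0:ℝ)..u, f s)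
    (hσ : 0 < σ) (hγ : 2 < γ)
    (hgrowth : ∀ u : ℝ, |u * f u| ≤ γ * |F u - σ|)
    (hutld : 0 < utld) (hne : F utld ≠ σ) :
    ∃ A : ℝ, 0 < A ∧ A = |F utld - σ| / utld ^ γ ∧
      ∀ u : ℝ, utld ≤ u → |F u - σ| ≤ A * u ^ γ := by
  have hγ0 : 0 < γ := by linarith
  have hFeq : F = fun u => ∫ s in (0:ℝ)..u, f s := funext hF
  have hderivF : ∀ u : ℝ, HasDerivAt F (f u) u := by
    intro u
    rw [hFeq]
    exact (hf.integral_hasStrictDerivAt 0 u).hasDerivAt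
  set φ : ℝ → ℝ := fun u => (F u - σ) ^ 2 * u ^ (-(2 * γ)) with hφdef
  have hφderiv : ∀ u : ℝ, 0 < u → HasDerivAt φ
      ((2 * (F u - σ) * f u) * u ^ (-(2 * γ))
        + (F u - σ) ^ 2 * (-(2 * γ) * u ^ (-(2 * γ) - 1))) u := by
    intro u hu
    have h1 : HasDerivAt (fun u => (F u - σ) ^ 2) (2 * (F u - σ) * f u) u := by
      have := ((hderivF u).sub_const σ).pow 2
      simpa [Pi.pow_def, mul_comm, mul_assoc, mul_left_comm] using this
    have h2 : HasDerivAt (fun u : ℝ => u ^ (-(2 * γ)))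
        (-(2 * γ) * u ^ (-(2 * γ) - 1)) u :=
      Real.hasDerivAt_rpow_const (Or.inl hu.ne')
    simpa [Pi.mul_def] using h1.mul h2
  have hderiv_nonpos : ∀ u : ℝ, 0 < u → deriv φ u ≤ 0 := by
    intro u hu
    rw [(hφderiv u hu).deriv]
    have hpow : u ^ (-(2 * γ)) = u ^ (-(2 * γ) - 1) * u := by
      have he : -(2 * γ) = (-(2 * γ) - 1) + 1 := by ring
      conv_lhs => rw [he]
      rw [Real.rpow_add hu, Real.rpow_one]
    have hkey : 2 * (F u - σ) * (f u * u) ≤ 2 * γ * (F u - σ) ^ 2 := by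
      calc 2 * (F u - σ) * (f u * u) ≤ 2 * (|F u - σ| * |u * f u|) := by
            rw [mul_assoc]
            gcongr 2 * ?_
            calc (F u - σ) * (f u * u) ≤ |(F u - σ) * (f u * u)| := le_abs_self _
              _ = |F u - σ| * |u * f u| := by rw [abs_mul, mul_comm (f u) u]
        _ ≤ 2 * (|F u - σ| * (γ * |F u - σ|)) := by
            gcongr 2 * (|F u - σ| * ?_)
            exact hgrowth u
        _ = 2 * γ * (F u - σ) ^ 2 := by rw [← sq_abs (F u - σ)]; ring
    have hp : (0:ℝ) < u ^ (-(2 * γ) - 1) := Real.rpow_pos_of_pos hu _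
    have : (2 * (F u - σ) * f u) * u ^ (-(2 * γ))
        + (F u - σ) ^ 2 * (-(2 * γ) * u ^ (-(2 * γ) - 1))
        = u ^ (-(2 * γ) - 1) * (2 * (F u - σ) * (f u * u) - 2 * γ * (F u - σ) ^ 2) := by
      rw [hpow]; ring
    rw [this]
    exact mul_nonpos_of_nonneg_of_nonpos hp.le (by linarith)
  have hanti : AntitoneOn φ (Set.Ici utld) := by
    apply antitoneOn_of_deriv_nonpos (convex_Ici utld)
    · intro u hu
      exact ((hφderiv u (lt_of_lt_of_le hutld hu)).continuousAt).continuousWithinAt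
    · intro u hu
      rw [interior_Ici] at hu
      exact (hφderiv u (hutld.trans hu)).differentiableAt.differentiableWithinAt
    · intro u hu
      rw [interior_Ici] at hu
      exact hderiv_nonpos u (hutld.trans hu)
  refine ⟨|F utld - σ| / utld ^ γ, ?_, rfl, ?_⟩
  · apply div_pos (abs_pos.mpr (sub_ne_zero.mpr hne)) (Real.rpow_pos_of_pos hutld γ)
  · intro u hu
    have hu0 : 0 < u := lt_of_lt_of_le hutld hu
    have hmono := hanti (Set.self_mem_Ici) hu hu
    -- φ u ≤ φ utld
    have hsq : (F u - σ) ^ 2 ≤ (|F utld - σ| / utld ^ γ * u ^ γ) ^ 2 := by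
      have key : ∀ x : ℝ, 0 < x → x ^ (-(2 * γ)) = (x ^ γ)⁻¹ ^ 2 := by
        intro x hx
        rw [inv_pow, ← Real.rpow_natCast (x ^ γ) 2, ← Real.rpow_mul hx.le,
          ← Real.rpow_neg hx.le]
        norm_num [mul_comm]
      have hneg := key u hu0
      have hnegt := key utld hutld
      have hup : (0:ℝ) < u ^ γ := Real.rpow_pos_of_pos hu0 γ
      have htp : (0:ℝ) < utld ^ γ := Real.rpow_pos_of_pos hutld γ
      have h1 : (F u - σ) ^ 2 * ((u ^ γ)⁻¹) ^ 2 ≤ (F utld - σ) ^ 2 * ((utld ^ γ)⁻¹) ^ 2 := by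
        simpa [hφdef, hneg, hnegt] using hmono
      have h2 : (F u - σ) ^ 2 ≤ (F utld - σ) ^ 2 * ((utld ^ γ)⁻¹) ^ 2 * (u ^ γ) ^ 2 := by
        have := mul_le_mul_of_nonneg_right h1 (sq_nonneg (u ^ γ))
        calc (F u - σ) ^ 2 = (F u - σ) ^ 2 * ((u ^ γ)⁻¹) ^ 2 * (u ^ γ) ^ 2 := by
              field_simp
          _ ≤ _ := this
      calc (F u - σ) ^ 2 ≤ (F utld - σ) ^ 2 * ((utld ^ γ)⁻¹) ^ 2 * (u ^ γ) ^ 2 := h2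
        _ = (|F utld - σ| / utld ^ γ * u ^ γ) ^ 2 := by
            rw [← sq_abs (F utld - σ)]; ring
    have hApos : 0 ≤ |F utld - σ| / utld ^ γ * u ^ γ := by
      positivity
    exact abs_le.mpr (abs_le_of_sq_le_sq' hsq hApos)
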